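/- Assume A1 and α ∈ [0,1). Let mixture iterates (λ_n, Θ_n) ∈ S_J^+ × T^J with mixture density μ_n k(y) = Σ_j λ_{j,n} k(θ_{j,n},y). If for all n both ∫ Σ_j λ_{j,n} (φ_{j,n}^α(y)/(α-1)) log(λ_{j,n+1}/λ_{j,n}) ν(dy) ≤ 0 and ∫ Σ_j λ_{j,n} (φ_{j,n}^α(y)/(α-1)) log(k(θ_{j,n+1},y)/k(θ_{j,n},y)) ν(dy) ≤ 0, where φ_{j,n}^α(y) = k(θ_{j,n},y)(μ_n k(y)/p(y))^{α-1}, and Ψ_α(μ_1 k) < ∞, then Ψ_α(μ_{n+1}k) ≤ Ψ_α(μ_n k) for all n ≥ 1. -/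

import Mathlib

open MeasureTheory

/-- `f_α`: generator of the α-divergence, extended by continuity at `α = 0`. -/
noncomputable def falpha (α u : ℝ) : ℝ :=
  if α = 0 then -Real.log u else (u ^ α - 1) / (α * (α - 1))

lemma key1 (α : ℝ) (hα0 : 0 ≤ α) (hα1 : α < 1) {u v : ℝ} (hu : 0 < u) (hv : 0 < v) :
    falpha α v ≤ falpha α u + u ^ α / (α - 1) * Real.log (v / u) := by
  rcases eq_or_lt_of_le hα0 with h0 | hαpos
  · subst h0
    simp [falpha, Real.log_div hv.ne' hu.ne']
  · have hαne : α ≠ 0 := ne_of_gt hαpos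
    have hα1' : α - 1 < 0 := by linarith
    simp only [falpha, if_neg hαne]
    have hc : α * (α - 1) < 0 := mul_neg_of_pos_of_neg hαpos hα1'
    have hx : (0:ℝ) < (v / u) ^ α := Real.rpow_pos_of_pos (div_pos hv hu) α
    have hlog : Real.log ((v / u) ^ α) ≤ (v / u) ^ α - 1 :=
      Real.log_le_sub_one_of_pos hx
    have hmul : u ^ α * (v / u) ^ α = v ^ α := by
      rw [← Real.mul_rpow hu.le (by positivity), mul_div_cancel₀ _ hu.ne']
    have h2 : u ^ α * (α * Real.log (v / u)) ≤ v ^ α - u ^ α := by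
      have := mul_le_mul_of_nonneg_left hlog (le_of_lt (Real.rpow_pos_of_pos hu α))
      rw [Real.log_rpow (div_pos hv hu)] at this
      nlinarith [this, hmul]
    rw [div_le_iff_of_neg hc, add_mul]
    have e1 : (u ^ α - 1) / (α * (α - 1)) * (α * (α - 1)) = u ^ α - 1 :=
      div_mul_cancel₀ _ hc.ne
    have e2 : u ^ α / (α - 1) * Real.log (v / u) * (α * (α - 1)) =
        u ^ α * (α * Real.log (v / u)) := by
      have h1ne : α - 1 ≠ 0 := hα1'.ne
      field_simp
    rw [e1, e2]
    linarith

lemma sum_log_le {J : ℕ} (w r : Fin J → ℝ) (hw : ∀ j, 0 < w j) (hr : ∀ j, 0 < r j)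
    (hsum : ∑ j, w j = 1) :
    ∑ j, w j * Real.log (r j) ≤ Real.log (∑ j, w j * r j) := by
  have hne : (Finset.univ : Finset (Fin J)).Nonempty := by
    rcases (Finset.univ : Finset (Fin J)).eq_empty_or_nonempty with h | h
    · exfalso; rw [Finset.sum_congr h (fun _ _ => rfl)] at hsum; simp at hsum
    · exact h
  have hS : 0 < ∑ j, w j * r j :=
    Finset.sum_pos (fun j _ => mul_pos (hw j) (hr j)) hne
  set S := ∑ j, w j * r j with hSdef
  have hterm : ∀ j : Fin J, w j * Real.log (r j) - w j * Real.log S ≤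
      w j * (r j / S) - w j := by
    intro j
    have h1 : Real.log (r j / S) ≤ r j / S - 1 :=
      Real.log_le_sub_one_of_pos (div_pos (hr j) hS)
    have h2 := mul_le_mul_of_nonneg_left h1 (hw j).le
    rw [Real.log_div (hr j).ne' hS.ne'] at h2
    nlinarith [h2]
  have hsum2 : ∑ j, (w j * Real.log (r j) - w j * Real.log S) ≤
      ∑ j, (w j * (r j / S) - w j) := Finset.sum_le_sum (fun j _ => hterm j)
  have hL : ∑ j, (w j * Real.log (r j) - w j * Real.log S) =
      (∑ j, w j * Real.log (r j)) - Real.log S := by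
    rw [Finset.sum_sub_distrib, ← Finset.sum_mul, hsum, one_mul]
  have hR : ∑ j, (w j * (r j / S) - w j) = 0 := by
    rw [Finset.sum_sub_distrib, hsum]
    have e : ∑ j, w j * (r j / S) = S / S := by
      rw [Finset.sum_congr rfl (fun j _ => (mul_div_assoc (w j) (r j) S).symm),
        ← Finset.sum_div]
    rw [e, div_self hS.ne']
    ring
  rw [hL, hR] at hsum2
  linarith

theorem stmt_9 {Y T : Type*} [MeasurableSpace Y] (ν : Measure Y) [SigmaFinite ν]
    (α : ℝ) (hα0 : 0 ≤ α) (hα1 : α < 1) (J : ℕ)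
    (k : T → Y → ℝ) (p : Y → ℝ)
    (hk : ∀ θ y, 0 < k θ y) (hknorm : ∀ θ, ∫ y, k θ y ∂ν = 1)
    (hp : ∀ y, 0 ≤ p y) (hpInt : Integrable p ν) (hppos : 0 < ∫ y, p y ∂ν)
    (lam : ℕ → Fin J → ℝ) (Θ : ℕ → Fin J → T)
    (hlampos : ∀ n j, 0 < lam n j) (hlamsum : ∀ n, ∑ j, lam n j = 1)
    (hΨInt : ∀ n, Integrable
      (fun y => falpha α ((∑ j, lam n j * k (Θ n j) y) / p y) * p y) ν)
    (hIntW : ∀ n, Integrable (fun y => ∑ j, lam n j *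
        (k (Θ n j) y * ((∑ i, lam n i * k (Θ n i) y) / p y) ^ (α - 1)) / (α - 1) *
        Real.log (lam (n + 1) j / lam n j)) ν)
    (hIntP : ∀ n, Integrable (fun y => ∑ j, lam n j *
        (k (Θ n j) y * ((∑ i, lam n i * k (Θ n i) y) / p y) ^ (α - 1)) / (α - 1) *
        Real.log (k (Θ (n + 1) j) y / k (Θ n j) y)) ν)
    (hIntM : ∀ n, Integrable (fun y =>
        (∑ j, lam n j * k (Θ n j) y) ^ α * (p y) ^ (1 - α) / (α - 1) *
        Real.log ((∑ j, lam (n + 1) j * k (Θ (n + 1) j) y) /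
          (∑ j, lam n j * k (Θ n j) y))) ν)
    (hcondW : ∀ n, ∫ y, (∑ j, lam n j *
        (k (Θ n j) y * ((∑ i, lam n i * k (Θ n i) y) / p y) ^ (α - 1)) / (α - 1) *
        Real.log (lam (n + 1) j / lam n j)) ∂ν ≤ 0)
    (hcondP : ∀ n, ∫ y, (∑ j, lam n j *
        (k (Θ n j) y * ((∑ i, lam n i * k (Θ n i) y) / p y) ^ (α - 1)) / (α - 1) *
        Real.log (k (Θ (n + 1) j) y / k (Θ n j) y)) ∂ν ≤ 0) :
    ∀ n, ∫ y, falpha α ((∑ j, lam (n + 1) j * k (Θ (n + 1) j) y) / p y) * p y ∂ν ≤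
      ∫ y, falpha α ((∑ j, lam n j * k (Θ n j) y) / p y) * p y ∂ν := by
  intro n
  have hα1' : α - 1 < 0 := by linarith
  have hm : ∀ n y, 0 < ∑ j, lam n j * k (Θ n j) y := by
    intro n y
    have hne : (Finset.univ : Finset (Fin J)).Nonempty := by
      rcases (Finset.univ : Finset (Fin J)).eq_empty_or_nonempty with h | h
      · exfalso
        have h1 := hlamsum 0
        rw [Finset.sum_congr h (fun _ _ => rfl)] at h1; simp at h1
      · exact h
    exact Finset.sum_pos (fun j _ => mul_pos (hlampos n j) (hk _ y)) hne
  -- Step A: pointwise bound by the tangent inequality for f_α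
  have stepA : ∀ y, falpha α ((∑ j, lam (n+1) j * k (Θ (n+1) j) y) / p y) * p y ≤
      falpha α ((∑ j, lam n j * k (Θ n j) y) / p y) * p y +
      (∑ j, lam n j * k (Θ n j) y) ^ α * (p y) ^ (1 - α) / (α - 1) *
        Real.log ((∑ j, lam (n+1) j * k (Θ (n+1) j) y) /
          (∑ j, lam n j * k (Θ n j) y)) := by
    intro y
    by_cases hpy : p y = 0
    · simp [hpy, Real.zero_rpow (show (1:ℝ) - α ≠ 0 by linarith)]
    · have hpy' : 0 < p y := lt_of_le_of_ne (hp y) (Ne.symm hpy)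
      set m := ∑ j, lam n j * k (Θ n j) y with hmdef
      set m' := ∑ j, lam (n+1) j * k (Θ (n+1) j) y with hm'def
      have hmpos : 0 < m := hm n y
      have hm'pos : 0 < m' := hm (n+1) y
      have h1 := key1 α hα0 hα1 (div_pos hmpos hpy') (div_pos hm'pos hpy')
      have h2 := mul_le_mul_of_nonneg_right h1 hpy'.le
      have hvu : m' / p y / (m / p y) = m' / m := by
        field_simp
      rw [hvu] at h2
      refine h2.trans (le_of_eq ?_)
      have e1 : (m / p y) ^ α = m ^ α * ((p y) ^ α)⁻¹ := by
        rw [Real.div_rpow hmpos.le hpy'.le, div_eq_mul_inv]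
      have e2 : (p y) ^ (1 - α) = p y * ((p y) ^ α)⁻¹ := by
        rw [Real.rpow_sub hpy', Real.rpow_one, div_eq_mul_inv]
      have hpane : (p y) ^ α ≠ 0 := (Real.rpow_pos_of_pos hpy' α).ne'
      have h1ne : α - 1 ≠ 0 := hα1'.ne
      rw [add_mul, e1, e2]
      field_simp
  -- Step C: pointwise bound by Jensen's inequality for log
  have stepC : ∀ y, (∑ j, lam n j * k (Θ n j) y) ^ α * (p y) ^ (1 - α) / (α - 1) *
        Real.log ((∑ j, lam (n+1) j * k (Θ (n+1) j) y) /
          (∑ j, lam n j * k (Θ n j) y)) ≤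
      (∑ j, lam n j *
        (k (Θ n j) y * ((∑ i, lam n i * k (Θ n i) y) / p y) ^ (α - 1)) / (α - 1) *
        Real.log (lam (n + 1) j / lam n j)) +
      (∑ j, lam n j *
        (k (Θ n j) y * ((∑ i, lam n i * k (Θ n i) y) / p y) ^ (α - 1)) / (α - 1) *
        Real.log (k (Θ (n + 1) j) y / k (Θ n j) y)) := by
    intro y
    by_cases hpy : p y = 0
    · simp [hpy, Real.zero_rpow (show (1:ℝ) - α ≠ 0 by linarith),
        Real.zero_rpow (show α - 1 ≠ 0 from hα1'.ne)]
    · have hpy' : 0 < p y := lt_of_le_of_ne (hp y) (Ne.symm hpy)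
      set m := ∑ j, lam n j * k (Θ n j) y with hmdef
      set m' := ∑ j, lam (n+1) j * k (Θ (n+1) j) y with hm'def
      have hmpos : 0 < m := hm n y
      have hm'pos : 0 < m' := hm (n+1) y
      have h1ne : α - 1 ≠ 0 := hα1'.ne
      set w : Fin J → ℝ := fun j => lam n j * k (Θ n j) y / m with hwdef
      set r : Fin J → ℝ := fun j =>
        lam (n+1) j * k (Θ (n+1) j) y / (lam n j * k (Θ n j) y) with hrdef
      have hw : ∀ j, 0 < w j := fun j =>
        div_pos (mul_pos (hlampos n j) (hk _ y)) hmpos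
      have hr : ∀ j, 0 < r j := fun j =>
        div_pos (mul_pos (hlampos (n+1) j) (hk _ y)) (mul_pos (hlampos n j) (hk _ y))
      have hsum : ∑ j, w j = 1 := by
        rw [hwdef, ← Finset.sum_div, ← hmdef, div_self hmpos.ne']
      have hJen := sum_log_le w r hw hr hsum
      have hwr : ∑ j, w j * r j = m' / m := by
        have e : ∀ j : Fin J, w j * r j = lam (n+1) j * k (Θ (n+1) j) y / m := by
          intro j
          rw [hwdef, hrdef]
          have hne : lam n j * k (Θ n j) y ≠ 0 :=
            (mul_pos (hlampos n j) (hk _ y)).ne'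
          show lam n j * k (Θ n j) y / m *
            (lam (n+1) j * k (Θ (n+1) j) y / (lam n j * k (Θ n j) y)) = _
          rw [div_mul_div_comm, mul_comm (lam n j * k (Θ n j) y) (lam (n+1) j * _),
            mul_div_mul_right _ _ hne]
        rw [Finset.sum_congr rfl (fun j _ => e j), ← Finset.sum_div, ← hm'def]
      rw [hwr] at hJen
      have hCneg : m ^ α * (p y) ^ (1 - α) / (α - 1) ≤ 0 :=
        le_of_lt (div_neg_of_pos_of_neg
          (mul_pos (Real.rpow_pos_of_pos hmpos α) (Real.rpow_pos_of_pos hpy' (1-α)))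
          hα1')
      have hstep := mul_le_mul_of_nonpos_left hJen hCneg
      refine hstep.trans (le_of_eq ?_)
      rw [Finset.mul_sum, ← Finset.sum_add_distrib]
      refine Finset.sum_congr rfl (fun j _ => ?_)
      have hlne : lam n j * k (Θ n j) y ≠ 0 := (mul_pos (hlampos n j) (hk _ y)).ne'
      have hlr : Real.log (r j) = Real.log (lam (n+1) j / lam n j) +
          Real.log (k (Θ (n+1) j) y / k (Θ n j) y) := by
        rw [← Real.log_mul (div_pos (hlampos (n+1) j) (hlampos n j)).ne'
          (div_pos (hk _ y) (hk _ y)).ne', hrdef]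
        congr 1
        rw [div_mul_div_comm]
      have em : m ^ (α - 1) * m = m ^ α := by
        rw [Real.rpow_sub hmpos, Real.rpow_one, div_mul_cancel₀ _ hmpos.ne']
      have edp : (m / p y) ^ (α - 1) = m ^ (α-1) * ((p y) ^ (α-1))⁻¹ := by
        rw [Real.div_rpow hmpos.le hpy'.le, div_eq_mul_inv]
      have ep : (p y) ^ (1 - α) = ((p y) ^ (α-1))⁻¹ := by
        rw [show (1 - α) = -(α-1) by ring, Real.rpow_neg hpy'.le]
      have hcoef : m ^ α * (p y) ^ (1 - α) / (α - 1) * w j =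
          lam n j * (k (Θ n j) y * ((m / p y) ^ (α - 1))) / (α - 1) := by
        rw [edp, ep, ← em, hwdef]
        have hpane : (p y) ^ (α-1) ≠ 0 := (Real.rpow_pos_of_pos hpy' _).ne'
        field_simp
      calc m ^ α * (p y) ^ (1 - α) / (α - 1) * (w j * Real.log (r j))
          = (m ^ α * (p y) ^ (1 - α) / (α - 1) * w j) *
              Real.log (lam (n+1) j / lam n j) +
            (m ^ α * (p y) ^ (1 - α) / (α - 1) * w j) *
              Real.log (k (Θ (n+1) j) y / k (Θ n j) y) := by rw [hlr]; ring
        _ = _ := by rw [hcoef]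
  -- Integrate the pointwise bounds
  have hA := integral_mono (hΨInt (n+1)) ((hΨInt n).add (hIntM n)) stepA
  simp only [Pi.add_apply] at hA
  rw [integral_add (hΨInt n) (hIntM n)] at hA
  have hC := integral_mono (hIntM n) ((hIntW n).add (hIntP n)) stepC
  simp only [Pi.add_apply] at hC
  rw [integral_add (hIntW n) (hIntP n)] at hC
  linarith [hcondW n, hcondP n]
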